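/- arXiv:2501.01935 — 6 statements merged into one kernel-verified Lean document; each statement's English description precedes it below -/
import Mathlib

section
/- For any z ∈ ℝ^n and positive integer k ≤ n, if ‖z‖_∞ ≤ ρ and z is such that ‖z‖₁ ≤ 2kρ, then for any g ∈ ℝ^m and matrix N ∈ ℝ^{m×n}, |g^T N z| ≤ ρ · ‖N^T g‖_{2k,1}, where ‖·‖_{2k,1} is the sum of the 2k largest magnitudes of entries. -/
open Matrix

/-- `‖w‖_{2k,1}`: the sum of the `min(2k,n)` largest magnitudes of entries of `w`. -/
noncomputable def knorm {n : ℕ} (k : ℕ) (z : Fin n → ℝ) : ℝ :=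
  sSup {v : ℝ | ∃ S : Finset (Fin n), S.card = min k n ∧ v = ∑ i ∈ S, |z i|}

lemma sum_le_knorm {n k : ℕ} (z : Fin n → ℝ) (S : Finset (Fin n))
    (hS : S.card = min k n) : ∑ i ∈ S, |z i| ≤ knorm k z := by
  apply le_csSup
  · refine ⟨∑ i, |z i|, ?_⟩
    rintro v ⟨T, hT, rfl⟩
    exact Finset.sum_le_sum_of_subset_of_nonneg (Finset.subset_univ T)
      (fun i _ _ => abs_nonneg _)
  · exact ⟨S, hS, rfl⟩

/-- If `‖z‖_∞ ≤ ρ` and `‖z‖₁ ≤ 2kρ` then `|gᵀNz| ≤ ρ‖Nᵀg‖_{2k,1}`. -/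
theorem dotProduct_le_knorm {m n : ℕ} (k : ℕ) (hk : 0 < k) (hkn : k ≤ n)
    (N : Matrix (Fin m) (Fin n) ℝ) (z : Fin n → ℝ) (ρ : ℝ) (hρ : 0 ≤ ρ)
    (hinf : ∀ i, |z i| ≤ ρ) (h1 : (∑ i, |z i|) ≤ 2 * k * ρ) (g : Fin m → ℝ) :
    |g ⬝ᵥ N.mulVec z| ≤ ρ * knorm (2 * k) (Nᵀ.mulVec g) := by
  set w := Nᵀ.mulVec g with hw
  have hdot : g ⬝ᵥ N.mulVec z = ∑ i, w i * z i := by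
    rw [Matrix.dotProduct_mulVec]
    simp [hw, Matrix.mulVec_transpose, dotProduct]
  have habs : |g ⬝ᵥ N.mulVec z| ≤ ∑ i, |w i| * |z i| := by
    rw [hdot]
    calc |∑ i, w i * z i| ≤ ∑ i, |w i * z i| := Finset.abs_sum_le_sum_abs _ _
    _ = ∑ i, |w i| * |z i| := by simp [abs_mul]
  rcases le_or_gt (2 * k) n with hcase | hcase
  · -- 2k ≤ n : use the 2k largest entries of |w|
    have htk : min (2 * k) n = 2 * k := min_eq_left hcase
    obtain ⟨S₀, hS₀sub, hS₀card⟩ := Finset.exists_subset_card_eq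
      (show 2 * k ≤ (Finset.univ : Finset (Fin n)).card by simpa using hcase)
    have hPne : (Finset.univ.powersetCard (2 * k) : Finset (Finset (Fin n))).Nonempty :=
      ⟨S₀, by simp [Finset.mem_powersetCard, hS₀sub, hS₀card]⟩
    obtain ⟨S, hSP, hSmax⟩ := Finset.exists_max_image _ (fun T => ∑ i ∈ T, |w i|) hPne
    have hScard : S.card = 2 * k := (Finset.mem_powersetCard.mp hSP).2
    have hSne : S.Nonempty := Finset.card_pos.mp (by rw [hScard]; omega)
    have hexch : ∀ i ∉ S, ∀ j ∈ S, |w i| ≤ |w j| := by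
      intro i hi j hj
      have hi' : i ∉ S.erase j := fun h => hi (Finset.mem_of_mem_erase h)
      have hS'card : (insert i (S.erase j)).card = 2 * k := by
        rw [Finset.card_insert_of_notMem hi', Finset.card_erase_of_mem hj, hScard]
        have : 1 ≤ S.card := Finset.card_pos.mpr ⟨j, hj⟩
        omega
      have hS'P : insert i (S.erase j) ∈ Finset.univ.powersetCard (2 * k) := by
        simp [Finset.mem_powersetCard, hS'card]
      have hle := hSmax _ hS'P
      rw [Finset.sum_insert hi'] at hle
      have h2 : ∑ x ∈ S.erase j, |w x| + |w j| = ∑ x ∈ S, |w x| :=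
        Finset.sum_erase_add S _ hj
      linarith
    obtain ⟨j₀, hj₀, hj₀min⟩ := Finset.exists_min_image S (fun j => |w j|) hSne
    set c := |w j₀| with hc
    have hc0 : 0 ≤ c := abs_nonneg _
    have hout : ∀ i ∉ S, |w i| ≤ c := fun i hi => hexch i hi j₀ hj₀
    have hin : ∀ j ∈ S, c ≤ |w j| := hj₀min
    have key : ∑ i, |w i| * |z i| ≤ ρ * ∑ i ∈ S, |w i| := by
      have hsplit : ∑ i, |w i| * |z i|
          = ∑ i ∈ S, |w i| * |z i| + ∑ i ∈ Sᶜ, |w i| * |z i| :=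
        (Finset.sum_add_sum_compl S _).symm
      have h2 : ∑ i ∈ Sᶜ, |w i| * |z i| ≤ c * ∑ i ∈ Sᶜ, |z i| := by
        rw [Finset.mul_sum]
        refine Finset.sum_le_sum fun i hi => ?_
        exact mul_le_mul_of_nonneg_right (hout i (by simpa using hi)) (abs_nonneg _)
      have h3 : ∑ i ∈ Sᶜ, |z i| = (∑ i, |z i|) - ∑ i ∈ S, |z i| := by
        rw [← Finset.sum_add_sum_compl S fun i => |z i|]; ring
      have h4 : ∑ i ∈ Sᶜ, |z i| ≤ 2 * k * ρ - ∑ i ∈ S, |z i| := by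
        rw [h3]; linarith
      have h5 : c * ∑ i ∈ Sᶜ, |z i| ≤ c * (2 * k * ρ - ∑ i ∈ S, |z i|) :=
        mul_le_mul_of_nonneg_left h4 hc0
      have h6 : (2 * k : ℝ) * ρ = ∑ _i ∈ S, ρ := by
        rw [Finset.sum_const, hScard]; push_cast; ring
      have h7 : c * (2 * k * ρ - ∑ i ∈ S, |z i|) = ∑ i ∈ S, c * (ρ - |z i|) := by
        rw [h6, ← Finset.sum_sub_distrib, Finset.mul_sum]
      have h8 : ∑ i ∈ S, (|w i| * |z i| + c * (ρ - |z i|)) ≤ ∑ i ∈ S, ρ * |w i| := by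
        refine Finset.sum_le_sum fun j hj => ?_
        have hcj := hin j hj
        have hzj := hinf j
        nlinarith [abs_nonneg (z j)]
      calc ∑ i, |w i| * |z i|
          = ∑ i ∈ S, |w i| * |z i| + ∑ i ∈ Sᶜ, |w i| * |z i| := hsplit
        _ ≤ ∑ i ∈ S, |w i| * |z i| + c * (2 * k * ρ - ∑ i ∈ S, |z i|) := by linarith
        _ = ∑ i ∈ S, (|w i| * |z i| + c * (ρ - |z i|)) := by
            rw [h7, Finset.sum_add_distrib]
        _ ≤ ∑ i ∈ S, ρ * |w i| := h8
        _ = ρ * ∑ i ∈ S, |w i| := by rw [Finset.mul_sum]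
    have hkn' : ∑ i ∈ S, |w i| ≤ knorm (2 * k) w :=
      sum_le_knorm w S (by rw [hScard, htk])
    calc |g ⬝ᵥ N.mulVec z| ≤ ∑ i, |w i| * |z i| := habs
      _ ≤ ρ * ∑ i ∈ S, |w i| := key
      _ ≤ ρ * knorm (2 * k) w := mul_le_mul_of_nonneg_left hkn' hρ
  · -- n < 2k : use all entries
    have htk : min (2 * k) n = n := min_eq_right hcase.le
    have key : ∑ i, |w i| * |z i| ≤ ρ * ∑ i, |w i| := by
      rw [Finset.mul_sum]
      refine Finset.sum_le_sum fun i _ => ?_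
      calc |w i| * |z i| ≤ |w i| * ρ :=
            mul_le_mul_of_nonneg_left (hinf i) (abs_nonneg _)
        _ = ρ * |w i| := mul_comm _ _
    have hkn' : ∑ i, |w i| ≤ knorm (2 * k) w :=
      sum_le_knorm w Finset.univ (by simp [htk])
    calc |g ⬝ᵥ N.mulVec z| ≤ ∑ i, |w i| * |z i| := habs
      _ ≤ ρ * ∑ i, |w i| := key
      _ ≤ ρ * knorm (2 * k) w := mul_le_mul_of_nonneg_left hkn' hρ
end

section
/- Let z ∈ ℝ^n satisfy ‖z‖_∞ ≤ ρ_∞, ‖z‖₂ ≤ ρ₂, ‖z‖₁ ≤ ρ₁. Then for any d ∈ ℝ^n, |d^T z| ≤ min over decompositions d = u + v + w of (ρ_∞‖u‖₁ + ρ₂‖v‖₂ + ρ₁‖w‖_∞). Conversely, max{d^T z : ‖z‖_∞ ≤ ρ_∞, ‖z‖₂ ≤ ρ₂, ‖z‖₁ ≤ ρ₁} equals inf{ρ_∞‖u‖₁ + ρ₂‖v‖₂ + ρ₁‖w‖_∞ : u+v+w = d}. -/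
open Matrix



noncomputable def l2 {n : ℕ} (v : Fin n → ℝ) : ℝ := Real.sqrt (∑ i, (v i) ^ 2)

lemma l2_eq_norm {n : ℕ} (v : Fin n → ℝ) :
    l2 v = ‖(WithLp.equiv 2 (Fin n → ℝ)).symm v‖ := by
  rw [EuclideanSpace.norm_eq]
  simp [l2, sq_abs]

lemma l2_nonneg {n : ℕ} (v : Fin n → ℝ) : 0 ≤ l2 v := Real.sqrt_nonneg _

lemma l2_add {n : ℕ} (a b : Fin n → ℝ) : l2 (a + b) ≤ l2 a + l2 b := by
  simp only [l2_eq_norm]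
  rw [show (WithLp.equiv 2 (Fin n → ℝ)).symm (a+b) = (WithLp.equiv 2 (Fin n → ℝ)).symm a + (WithLp.equiv 2 (Fin n → ℝ)).symm b from rfl]
  exact norm_add_le _ _

lemma l2_smul {n : ℕ} (s : ℝ) (v : Fin n → ℝ) : l2 (s • v) = |s| * l2 v := by
  simp only [l2_eq_norm]
  rw [show (WithLp.equiv 2 (Fin n → ℝ)).symm (s • v) = s • (WithLp.equiv 2 (Fin n → ℝ)).symm v from rfl]
  rw [norm_smul]; simp [Real.norm_eq_abs]

noncomputable def sa {n : ℕ} (w : Fin n → ℝ) : ℝ := ⨆ i, |w i|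

lemma sa_nonneg {n : ℕ} (w : Fin n → ℝ) : 0 ≤ sa w :=
  Real.iSup_nonneg fun i => abs_nonneg _

lemma le_sa {n : ℕ} (w : Fin n → ℝ) (i : Fin n) : |w i| ≤ sa w :=
  le_ciSup (f := fun i => |w i|) (Set.Finite.bddAbove (Set.finite_range _)) i

lemma sa_le {n : ℕ} (w : Fin n → ℝ) (c : ℝ) (hc : 0 ≤ c) (h : ∀ i, |w i| ≤ c) : sa w ≤ c := by
  cases isEmpty_or_nonempty (Fin n) with
  | inl h' => simp [sa, Real.iSup_of_isEmpty, hc]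
  | inr h' => exact ciSup_le h

lemma cauchy {n : ℕ} (v z : Fin n → ℝ) : |v ⬝ᵥ z| ≤ l2 v * l2 z := by
  have := abs_real_inner_le_norm ((WithLp.equiv 2 (Fin n → ℝ)).symm v) ((WithLp.equiv 2 (Fin n → ℝ)).symm z)
  rw [← l2_eq_norm, ← l2_eq_norm] at this
  have h : v ⬝ᵥ z = (inner ℝ ((WithLp.equiv 2 (Fin n → ℝ)).symm v) ((WithLp.equiv 2 (Fin n → ℝ)).symm z) : ℝ) := by
    simp [dotProduct, PiLp.inner_apply, RCLike.inner_apply, mul_comm]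
  rw [h]; exact this

lemma weakdual {n : ℕ} {ρinf ρ2 ρ1 : ℝ} (hρinf : 0 ≤ ρinf) (hρ2 : 0 ≤ ρ2) (hρ1 : 0 ≤ ρ1)
    (z : Fin n → ℝ) (hz1 : ∀ i, |z i| ≤ ρinf) (hz2 : l2 z ≤ ρ2) (hz3 : (∑ i, |z i|) ≤ ρ1)
    (u v w : Fin n → ℝ) :
    |(u + v + w) ⬝ᵥ z| ≤ ρinf * (∑ i, |u i|) + ρ2 * l2 v + ρ1 * sa w := by
  have h1 : |u ⬝ᵥ z| ≤ ρinf * (∑ i, |u i|) := by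
    calc |u ⬝ᵥ z| ≤ ∑ i, |u i * z i| := Finset.abs_sum_le_sum_abs _ _
    _ ≤ ∑ i, |u i| * ρinf := by
        refine Finset.sum_le_sum fun i _ => ?_
        rw [abs_mul]
        exact mul_le_mul_of_nonneg_left (hz1 i) (abs_nonneg _)
    _ = ρinf * (∑ i, |u i|) := by rw [← Finset.sum_mul, mul_comm]
  have h2 : |v ⬝ᵥ z| ≤ ρ2 * l2 v := by
    calc |v ⬝ᵥ z| ≤ l2 v * l2 z := cauchy v z
    _ ≤ l2 v * ρ2 := mul_le_mul_of_nonneg_left hz2 (l2_nonneg v)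
    _ = ρ2 * l2 v := mul_comm _ _
  have h3 : |w ⬝ᵥ z| ≤ ρ1 * sa w := by
    calc |w ⬝ᵥ z| ≤ ∑ i, |w i * z i| := Finset.abs_sum_le_sum_abs _ _
    _ ≤ ∑ i, sa w * |z i| := by
        refine Finset.sum_le_sum fun i _ => ?_
        rw [abs_mul]
        exact mul_le_mul_of_nonneg_right (le_sa w i) (abs_nonneg _)
    _ = sa w * ∑ i, |z i| := by rw [Finset.mul_sum]
    _ ≤ sa w * ρ1 := mul_le_mul_of_nonneg_left hz3 (sa_nonneg w)
    _ = ρ1 * sa w := mul_comm _ _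
  calc |(u + v + w) ⬝ᵥ z| = |u ⬝ᵥ z + v ⬝ᵥ z + w ⬝ᵥ z| := by
        rw [add_dotProduct, add_dotProduct]
  _ ≤ |u ⬝ᵥ z| + |v ⬝ᵥ z| + |w ⬝ᵥ z| := (abs_add_le _ _).trans (add_le_add_left (abs_add_le _ _) _)
  _ ≤ _ := add_le_add (add_le_add h1 h2) h3

lemma l2_zero {n : ℕ} : l2 (0 : Fin n → ℝ) = 0 := by simp [l2]

lemma sa_zero {n : ℕ} : sa (0 : Fin n → ℝ) = 0 := by
  refine le_antisymm (sa_le _ 0 le_rfl fun i => by simp) (sa_nonneg _)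

noncomputable def val {n : ℕ} (ρinf ρ2 ρ1 : ℝ) (u v w : Fin n → ℝ) : ℝ :=
  ρinf * (∑ i, |u i|) + ρ2 * l2 v + ρ1 * sa w

lemma val_nonneg {n : ℕ} {ρinf ρ2 ρ1 : ℝ} (h1 : 0 ≤ ρinf) (h2 : 0 ≤ ρ2) (h3 : 0 ≤ ρ1)
    (u v w : Fin n → ℝ) : 0 ≤ val ρinf ρ2 ρ1 u v w := by
  have : (0:ℝ) ≤ ∑ i, |u i| := Finset.sum_nonneg fun i _ => abs_nonneg _
  have := l2_nonneg v; have := sa_nonneg w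
  unfold val; positivity

def Epi {n : ℕ} (ρinf ρ2 ρ1 : ℝ) : Set ((Fin n → ℝ) × ℝ) :=
  {p | ∃ u v w, u + v + w = p.1 ∧ val ρinf ρ2 ρ1 u v w ≤ p.2}

lemma Epi_convex {n : ℕ} {ρinf ρ2 ρ1 : ℝ} (h1 : 0 ≤ ρinf) (h2 : 0 ≤ ρ2) (h3 : 0 ≤ ρ1) :
    Convex ℝ (Epi (n := n) ρinf ρ2 ρ1) := by
  rintro ⟨x₁, t₁⟩ ⟨u₁, v₁, w₁, hs₁, hv₁⟩ ⟨x₂, t₂⟩ ⟨u₂, v₂, w₂, hs₂, hv₂⟩ a b ha hb hab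
  replace hs₁ : u₁ + v₁ + w₁ = x₁ := hs₁
  replace hs₂ : u₂ + v₂ + w₂ = x₂ := hs₂
  replace hv₁ : val ρinf ρ2 ρ1 u₁ v₁ w₁ ≤ t₁ := hv₁
  replace hv₂ : val ρinf ρ2 ρ1 u₂ v₂ w₂ ≤ t₂ := hv₂
  refine ⟨a • u₁ + b • u₂, a • v₁ + b • v₂, a • w₁ + b • w₂, ?_, ?_⟩
  · show _ = a • x₁ + b • x₂
    rw [← hs₁, ← hs₂]; module
  · show val ρinf ρ2 ρ1 _ _ _ ≤ a * t₁ + b * t₂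
    have hu : (∑ i, |(a • u₁ + b • u₂) i|) ≤ a * (∑ i, |u₁ i|) + b * (∑ i, |u₂ i|) := by
      rw [Finset.mul_sum, Finset.mul_sum, ← Finset.sum_add_distrib]
      refine Finset.sum_le_sum fun i _ => ?_
      calc |a * u₁ i + b * u₂ i| ≤ |a * u₁ i| + |b * u₂ i| := abs_add_le _ _
      _ = a * |u₁ i| + b * |u₂ i| := by rw [abs_mul, abs_mul, abs_of_nonneg ha, abs_of_nonneg hb]
    have hv : l2 (a • v₁ + b • v₂) ≤ a * l2 v₁ + b * l2 v₂ := by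
      calc l2 (a • v₁ + b • v₂) ≤ l2 (a • v₁) + l2 (b • v₂) := l2_add _ _
      _ = a * l2 v₁ + b * l2 v₂ := by rw [l2_smul, l2_smul, abs_of_nonneg ha, abs_of_nonneg hb]
    have hw : sa (a • w₁ + b • w₂) ≤ a * sa w₁ + b * sa w₂ := by
      have h4 := sa_nonneg w₁; have h5 := sa_nonneg w₂
      refine sa_le _ _ (by positivity) fun i => ?_
      calc |a * w₁ i + b * w₂ i| ≤ |a * w₁ i| + |b * w₂ i| := abs_add_le _ _
      _ = a * |w₁ i| + b * |w₂ i| := by rw [abs_mul, abs_mul, abs_of_nonneg ha, abs_of_nonneg hb]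
      _ ≤ a * sa w₁ + b * sa w₂ := by
          gcongr
          exacts [le_sa _ _, le_sa _ _]
    have : val ρinf ρ2 ρ1 (a • u₁ + b • u₂) (a • v₁ + b • v₂) (a • w₁ + b • w₂)
        ≤ a * val ρinf ρ2 ρ1 u₁ v₁ w₁ + b * val ρinf ρ2 ρ1 u₂ v₂ w₂ := by
      unfold val; nlinarith [l2_nonneg v₁, l2_nonneg v₂, sa_nonneg w₁, sa_nonneg w₂]
    refine this.trans ?_
    exact add_le_add (mul_le_mul_of_nonneg_left hv₁ ha) (mul_le_mul_of_nonneg_left hv₂ hb)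

lemma strongdual {n : ℕ} {ρinf ρ2 ρ1 : ℝ} (hρinf : 0 < ρinf) (hρ2 : 0 < ρ2) (hρ1 : 0 < ρ1)
    (d : Fin n → ℝ) :
    sInf {x : ℝ | ∃ u v w, u + v + w = d ∧ x = val ρinf ρ2 ρ1 u v w} ≤
      sSup {x : ℝ | ∃ z : Fin n → ℝ, (∀ i, |z i| ≤ ρinf) ∧ l2 z ≤ ρ2 ∧ (∑ i, |z i|) ≤ ρ1 ∧
        x = d ⬝ᵥ z} := by
  set T := {x : ℝ | ∃ u v w, u + v + w = d ∧ x = val ρinf ρ2 ρ1 u v w} with hT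
  set S := {x : ℝ | ∃ z : Fin n → ℝ, (∀ i, |z i| ≤ ρinf) ∧ l2 z ≤ ρ2 ∧ (∑ i, |z i|) ≤ ρ1 ∧
    x = d ⬝ᵥ z} with hS
  have hTne : T.Nonempty := ⟨val ρinf ρ2 ρ1 d 0 0, d, 0, 0, by simp, rfl⟩
  have hTbdd : BddBelow T := by
    refine ⟨0, fun x hx => ?_⟩
    obtain ⟨u, v, w, _, hx⟩ := hx
    exact hx ▸ val_nonneg hρinf.le hρ2.le hρ1.le u v w
  have hSbdd : BddAbove S := by
    refine ⟨val ρinf ρ2 ρ1 d 0 0, fun x hx => ?_⟩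
    obtain ⟨z, hz1, hz2, hz3, hx⟩ := hx
    have := weakdual hρinf.le hρ2.le hρ1.le z hz1 hz2 hz3 d 0 0
    have hd : d + 0 + 0 = d := by simp
    rw [hd] at this
    rw [hx]
    exact (le_abs_self _).trans this
  by_contra hcon
  push_neg at hcon
  set M := sSup S with hM
  have hnotin : (d, M) ∉ closure (Epi (n := n) ρinf ρ2 ρ1) := by
    intro hmem
    have key : ∀ ε > (0:ℝ), sInf T ≤ M + ε * (1 + ρinf * n) := by
      intro ε hε
      rw [Metric.mem_closure_iff] at hmem
      obtain ⟨p, hpE, hdist⟩ := hmem ε hε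
      obtain ⟨u, v, w, hsum, hval⟩ := hpE
      have hx : ∀ i, |d i - p.1 i| ≤ ε := by
        intro i
        have h1 : dist (d i) (p.1 i) ≤ dist d p.1 := dist_le_pi_dist d p.1 i
        have h2 : dist d p.1 ≤ dist (d, M) p := by
          rw [show p = (p.1, p.2) from rfl, Prod.dist_eq]
          exact le_max_left _ _
        rw [Real.dist_eq] at h1
        linarith
      have ht : p.2 ≤ M + ε := by
        have h2 : dist M p.2 ≤ dist (d, M) p := by
          rw [show p = (p.1, p.2) from rfl, Prod.dist_eq]
          exact le_max_right _ _
        rw [Real.dist_eq] at h2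
        have := abs_sub_abs_le_abs_sub M p.2
        have h3 : |M - p.2| < ε := lt_of_le_of_lt h2 hdist
        have := abs_lt.1 h3
        linarith [this.1]
      have hmemT : val ρinf ρ2 ρ1 (u + (d - p.1)) v w ∈ T := by
        refine ⟨u + (d - p.1), v, w, ?_, rfl⟩
        rw [show u + (d - p.1) + v + w = (u + v + w) + (d - p.1) by module, hsum]
        module
      have hle : sInf T ≤ val ρinf ρ2 ρ1 (u + (d - p.1)) v w := csInf_le hTbdd hmemT
      have hval2 : val ρinf ρ2 ρ1 (u + (d - p.1)) v w
          ≤ val ρinf ρ2 ρ1 u v w + ρinf * (n * ε) := by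
        unfold val
        have hsum2 : (∑ i, |(u + (d - p.1)) i|) ≤ (∑ i, |u i|) + n * ε := by
          have : ∀ i, |(u + (d - p.1)) i| ≤ |u i| + ε := by
            intro i
            calc |(u + (d - p.1)) i| = |u i + (d i - p.1 i)| := rfl
            _ ≤ |u i| + |d i - p.1 i| := abs_add_le _ _
            _ ≤ |u i| + ε := by linarith [hx i]
          calc (∑ i, |(u + (d - p.1)) i|) ≤ ∑ i, (|u i| + ε) := Finset.sum_le_sum fun i _ => this i
          _ = (∑ i, |u i|) + n * ε := by
              rw [Finset.sum_add_distrib, Finset.sum_const, Finset.card_univ, Fintype.card_fin,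
                nsmul_eq_mul]
        nlinarith [hρinf.le]
      have : sInf T ≤ M + ε + ρinf * (n * ε) := by linarith
      have hεn : M + ε + ρinf * (n * ε) = M + ε * (1 + ρinf * n) := by ring
      linarith
    have hfin : sInf T ≤ M := by
      refine le_of_forall_pos_le_add fun ε hε => ?_
      have hpos : (0:ℝ) < 1 + ρinf * n := by positivity
      have h1 := key (ε / (1 + ρinf * n)) (by positivity)
      have h2 : ε / (1 + ρinf * n) * (1 + ρinf * n) = ε := div_mul_cancel₀ _ (ne_of_gt hpos)
      linarith
    linarith
  obtain ⟨f, b, hfE, hfd⟩ := geometric_hahn_banach_closed_point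
    ((Epi_convex hρinf.le hρ2.le hρ1.le).closure) isClosed_closure hnotin
  set φ : (Fin n → ℝ) →L[ℝ] ℝ := f.comp (ContinuousLinearMap.inl ℝ (Fin n → ℝ) ℝ) with hφdef
  set c := f ((0 : Fin n → ℝ), (1:ℝ)) with hcdef
  have hsplit : ∀ (x : Fin n → ℝ) (t : ℝ), f (x, t) = φ x + t * c := by
    intro x t
    have hxt : ((x, t) : (Fin n → ℝ) × ℝ) = (x, 0) + t • ((0 : Fin n → ℝ), (1:ℝ)) := by
      rw [Prod.smul_mk, Prod.mk_add_mk]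
      simp
    rw [hxt, map_add, f.map_smul, smul_eq_mul]
    rfl
  have hflt : ∀ p ∈ Epi (n := n) ρinf ρ2 ρ1, f p < b := fun p hp => hfE p (subset_closure hp)
  have hEmem : ∀ u v w : Fin n → ℝ, ∀ t : ℝ, val ρinf ρ2 ρ1 u v w ≤ t →
      ((u + v + w, t) : (Fin n → ℝ) × ℝ) ∈ Epi (n := n) ρinf ρ2 ρ1 :=
    fun u v w t h => ⟨u, v, w, rfl, h⟩
  have hc : c < 0 := by
    rcases lt_trichotomy c 0 with h | h | h
    · exact h
    · exfalso
      have h1 := hflt _ (hEmem d 0 0 (val ρinf ρ2 ρ1 d 0 0) le_rfl)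
      rw [hsplit, h, mul_zero, add_zero] at h1
      rw [hsplit, h, mul_zero, add_zero] at hfd
      have hd : d + 0 + 0 = d := by simp
      rw [hd] at h1
      linarith
    · exfalso
      set t := max (val ρinf ρ2 ρ1 d 0 0) ((b - φ d) / c) with htdef
      have h1 := hflt _ (hEmem d 0 0 t (le_max_left _ _))
      rw [hsplit] at h1
      have hd : d + 0 + 0 = d := by simp
      rw [hd] at h1
      have h2 : (b - φ d) / c ≤ t := le_max_right _ _
      rw [div_le_iff₀ h] at h2
      linarith
  have hcpos : 0 < -c := neg_pos.2 hc
  set q : Fin n → ℝ := fun i => φ ((Pi.single i 1 : Fin n → ℝ)) / (-c) with hqdef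
  have hφq : ∀ x : Fin n → ℝ, φ x = (x ⬝ᵥ q) * (-c) := by
    intro x
    have hx : x = ∑ i, x i • (Pi.single i (1:ℝ) : Fin n → ℝ) := by
      funext j
      simp [Pi.single_apply, Finset.sum_apply]
    calc φ x = φ (∑ i, x i • (Pi.single i (1:ℝ) : Fin n → ℝ)) := by rw [← hx]
    _ = ∑ i, x i * φ ((Pi.single i 1 : Fin n → ℝ)) := by rw [map_sum]; simp [smul_eq_mul]
    _ = ∑ i, x i * (q i * (-c)) := by
        refine Finset.sum_congr rfl fun i _ => ?_
        rw [hqdef]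
        rw [div_mul_cancel₀ _ (ne_of_gt hcpos)]
    _ = (x ⬝ᵥ q) * (-c) := by rw [dotProduct, Finset.sum_mul]; simp [mul_assoc]
  set b' := b / (-c) with hb'def
  have hkey : ∀ p ∈ Epi (n := n) ρinf ρ2 ρ1, p.1 ⬝ᵥ q - p.2 < b' := by
    intro p hp
    have h1 := hflt p hp
    rw [show p = (p.1, p.2) from rfl, hsplit, hφq] at h1
    rw [hb'def, lt_div_iff₀ hcpos]
    have : (p.1 ⬝ᵥ q - p.2) * (-c) = (p.1 ⬝ᵥ q) * (-c) + p.2 * c := by ring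
    rw [this]
    exact h1
  have hkey2 : b' < d ⬝ᵥ q - M := by
    rw [hsplit, hφq] at hfd
    rw [hb'def, div_lt_iff₀ hcpos]
    have : (d ⬝ᵥ q - M) * (-c) = (d ⬝ᵥ q) * (-c) + M * c := by ring
    rw [this]
    exact hfd
  have hb'pos : 0 < b' := by
    have h0 := hkey _ (hEmem 0 0 0 0 (le_of_eq (by simp [val, l2_zero, sa_zero])))
    simpa using h0
  have hqinf : ∀ i, |q i| ≤ ρinf := by
    by_contra hna
    push_neg at hna
    obtain ⟨i, hi⟩ := hna
    set s := (b' + 1) / (|q i| - ρinf) with hsdef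
    have hspos : 0 < s := div_pos (by linarith) (by linarith)
    set sg : ℝ := if 0 ≤ q i then 1 else -1 with hsgdef
    set x : Fin n → ℝ := Pi.single i (s * sg) with hxdef
    have hxq : x ⬝ᵥ q = s * |q i| := by
      rw [dotProduct, Finset.sum_eq_single i]
      · rw [hxdef, Pi.single_eq_same, hsgdef]
        by_cases hq : 0 ≤ q i
        · rw [if_pos hq, abs_of_nonneg hq]; ring
        · rw [if_neg hq, abs_of_neg (lt_of_not_ge hq)]; ring
      · intro j _ hj
        rw [hxdef, Pi.single_eq_of_ne hj, zero_mul]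
      · intro h; exact absurd (Finset.mem_univ i) h
    have habs : |s * sg| = s := by
      rw [abs_mul, abs_of_pos hspos, hsgdef]
      by_cases hq : 0 ≤ q i <;> simp [hq]
    have hsum : (∑ j, |x j|) = s := by
      rw [Finset.sum_eq_single i]
      · rw [hxdef, Pi.single_eq_same]; exact habs
      · intro j _ hj
        rw [hxdef, Pi.single_eq_of_ne hj, abs_zero]
      · intro h; exact absurd (Finset.mem_univ i) h
    have hvx : val ρinf ρ2 ρ1 x 0 0 = ρinf * s := by
      simp [val, l2_zero, sa_zero, hsum]
    have hmem := hkey _ (hEmem x 0 0 (ρinf * s) (le_of_eq hvx))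
    have hx00 : x + 0 + 0 = x := by simp
    rw [hx00] at hmem
    simp only at hmem
    rw [hxq] at hmem
    have hcancel : s * (|q i| - ρinf) = b' + 1 := div_mul_cancel₀ _ (by linarith)
    have hring : s * |q i| - ρinf * s = s * (|q i| - ρinf) := by ring
    linarith
  have hq2 : l2 q ≤ ρ2 := by
    by_contra hna
    push_neg at hna
    have hl2pos : 0 < l2 q := lt_trans hρ2 hna
    set s := (b' + 1) / (l2 q * (l2 q - ρ2)) with hsdef
    have hden : 0 < l2 q * (l2 q - ρ2) := mul_pos hl2pos (by linarith)
    have hspos : 0 < s := div_pos (by linarith) hden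
    have hqq : q ⬝ᵥ q = l2 q ^ 2 := by
      rw [l2, Real.sq_sqrt (Finset.sum_nonneg fun i _ => sq_nonneg _), dotProduct]
      exact Finset.sum_congr rfl fun i _ => (sq (q i)).symm
    have hx : (s • q) ⬝ᵥ q = s * l2 q ^ 2 := by
      rw [smul_dotProduct, hqq, smul_eq_mul]
    have hvx : val ρinf ρ2 ρ1 0 (s • q) 0 = ρ2 * (s * l2 q) := by
      simp [val, l2_smul, sa_zero, abs_of_pos hspos]
    have hmem := hkey _ (hEmem 0 (s • q) 0 (ρ2 * (s * l2 q)) (le_of_eq hvx))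
    have hx00 : (0 : Fin n → ℝ) + s • q + 0 = s • q := by simp
    rw [hx00] at hmem
    simp only at hmem
    rw [hx] at hmem
    have hcancel : s * (l2 q * (l2 q - ρ2)) = b' + 1 := div_mul_cancel₀ _ (ne_of_gt hden)
    have hring : s * l2 q ^ 2 - ρ2 * (s * l2 q) = s * (l2 q * (l2 q - ρ2)) := by ring
    linarith
  have hq1 : (∑ i, |q i|) ≤ ρ1 := by
    by_contra hna
    push_neg at hna
    cases isEmpty_or_nonempty (Fin n) with
    | inl h =>
      rw [Finset.univ_eq_empty, Finset.sum_empty] at hna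
      linarith
    | inr h =>
      set s := (b' + 1) / ((∑ i, |q i|) - ρ1) with hsdef
      have hspos : 0 < s := div_pos (by linarith) (by linarith)
      set x : Fin n → ℝ := fun j => s * (if 0 ≤ q j then 1 else -1) with hxdef
      have hxq : x ⬝ᵥ q = s * ∑ j, |q j| := by
        rw [dotProduct, Finset.mul_sum]
        refine Finset.sum_congr rfl fun j _ => ?_
        show s * (if 0 ≤ q j then (1:ℝ) else -1) * q j = s * |q j|
        by_cases hq : 0 ≤ q j
        · rw [if_pos hq, abs_of_nonneg hq]; ring
        · rw [if_neg hq, abs_of_neg (lt_of_not_ge hq)]; ring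
      have habs : ∀ j, |x j| = s := by
        intro j
        show |s * (if 0 ≤ q j then (1:ℝ) else -1)| = s
        rw [abs_mul, abs_of_pos hspos]
        by_cases hq : 0 ≤ q j <;> simp [hq]
      have hsax : sa x = s := by
        refine le_antisymm (sa_le _ _ hspos.le fun j => (habs j).le) ?_
        obtain ⟨j⟩ := h
        calc s = |x j| := (habs j).symm
        _ ≤ sa x := le_sa _ _
      have hvx : val ρinf ρ2 ρ1 0 0 x = ρ1 * s := by
        simp [val, l2_zero, hsax]
      have hmem := hkey _ (hEmem 0 0 x (ρ1 * s) (le_of_eq hvx))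
      have hx00 : (0 : Fin n → ℝ) + 0 + x = x := by simp
      rw [hx00] at hmem
      simp only at hmem
      rw [hxq] at hmem
      have hcancel : s * ((∑ i, |q i|) - ρ1) = b' + 1 := div_mul_cancel₀ _ (by linarith)
      have hring : s * (∑ j, |q j|) - ρ1 * s = s * ((∑ i, |q i|) - ρ1) := by ring
      linarith
  have hqS : d ⬝ᵥ q ∈ S := ⟨q, hqinf, hq2, hq1, rfl⟩
  have hle := le_csSup hSbdd hqS
  rw [← hM] at hle
  linarith


/-- Duality for the intersection of `ℓ_∞`, `ℓ₂`, `ℓ₁` balls: if `‖z‖_∞ ≤ ρ_∞`,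
`‖z‖₂ ≤ ρ₂`, `‖z‖₁ ≤ ρ₁`, then for every decomposition `d = u + v + w`,
`|dᵀz| ≤ ρ_∞‖u‖₁ + ρ₂‖v‖₂ + ρ₁‖w‖_∞`; moreover the max of `dᵀz` over the
intersection equals the infimal convolution of the dual norms. -/
theorem dual_of_intersection_of_balls {n : ℕ} (ρinf ρ2 ρ1 : ℝ)
    (hρinf : 0 < ρinf) (hρ2 : 0 < ρ2) (hρ1 : 0 < ρ1) :
    (∀ z : Fin n → ℝ, (∀ i, |z i| ≤ ρinf) → Real.sqrt (∑ i, (z i) ^ 2) ≤ ρ2 →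
      (∑ i, |z i|) ≤ ρ1 → ∀ d u v w : Fin n → ℝ, d = u + v + w →
        |d ⬝ᵥ z| ≤ ρinf * (∑ i, |u i|) + ρ2 * Real.sqrt (∑ i, (v i) ^ 2) +
          ρ1 * (⨆ i, |w i|)) ∧
    (∀ d : Fin n → ℝ,
      sSup {x : ℝ | ∃ z : Fin n → ℝ, (∀ i, |z i| ≤ ρinf) ∧
          Real.sqrt (∑ i, (z i) ^ 2) ≤ ρ2 ∧ (∑ i, |z i|) ≤ ρ1 ∧ x = d ⬝ᵥ z} =
        sInf {x : ℝ | ∃ u v w : Fin n → ℝ, u + v + w = d ∧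
          x = ρinf * (∑ i, |u i|) + ρ2 * Real.sqrt (∑ i, (v i) ^ 2) +
            ρ1 * (⨆ i, |w i|)}) := by
  constructor
  · intro z hz1 hz2 hz3 d u v w hd
    subst hd
    exact weakdual hρinf.le hρ2.le hρ1.le z hz1 hz2 hz3 u v w
  · intro d
    refine le_antisymm ?_ (strongdual hρinf hρ2 hρ1 d)
    have hTne : {x : ℝ | ∃ u v w : Fin n → ℝ, u + v + w = d ∧
        x = ρinf * (∑ i, |u i|) + ρ2 * Real.sqrt (∑ i, (v i) ^ 2) +
          ρ1 * (⨆ i, |w i|)}.Nonempty :=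
      ⟨_, d, 0, 0, by simp, rfl⟩
    have hSne : {x : ℝ | ∃ z : Fin n → ℝ, (∀ i, |z i| ≤ ρinf) ∧
        Real.sqrt (∑ i, (z i) ^ 2) ≤ ρ2 ∧ (∑ i, |z i|) ≤ ρ1 ∧ x = d ⬝ᵥ z}.Nonempty := by
      refine ⟨0, 0, fun i => by simpa using hρinf.le, ?_, ?_, by simp⟩
      · simpa using hρ2.le
      · simpa using hρ1.le
    refine le_csInf hTne ?_
    rintro t ⟨u, v, w, hsum, rfl⟩
    refine csSup_le hSne ?_
    rintro s ⟨z, hz1, hz2, hz3, rfl⟩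
    have h := weakdual hρinf.le hρ2.le hρ1.le z hz1 hz2 hz3 u v w
    rw [hsum] at h
    exact (le_abs_self _).trans h
end

section
/- Let H satisfy Condition Q_∞(s,κ) with κ < 1/2 for the matrix N. For any ν, ν̂ ∈ ℝ^n with ‖ν̂‖₁ ≤ ‖ν‖₁, letting z = ν̂ − ν and ρ = ‖H^T N z‖_∞, one has ‖z‖₁ ≤ (2sρ + 2‖ν − ν^s‖₁)/(1 − 2κ), where ν^s is ν with all but its s largest-magnitude entries zeroed out. -/
open Matrix

/-- If `H` satisfies Condition `Q_∞(s,κ)` with `κ < 1/2`, `‖ν̂‖₁ ≤ ‖ν‖₁`,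
`z = ν̂ − ν`, `ρ = ‖HᵀNz‖_∞`, then `‖z‖₁ ≤ (2sρ + 2‖ν − νˢ‖₁)/(1 − 2κ)`. -/
theorem l1_error_bound {m n : ℕ} (N H : Matrix (Fin m) (Fin n) ℝ)
    (s : ℕ) (hs : 0 < s) (hsn : s ≤ n) (κ : ℝ) (hκ0 : 0 < κ) (hκ : κ < 1 / 2)
    (hQ : ∀ w : Fin n → ℝ,
      (⨆ i, |w i|) ≤ (⨆ i, |(Hᵀ * N).mulVec w i|) + (κ / s) * ∑ i, |w i|)
    (ν νhat : Fin n → ℝ) (h1 : (∑ i, |νhat i|) ≤ ∑ i, |ν i|) :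
    (∑ i, |νhat i - ν i|) ≤
      (2 * s * (⨆ k, |(Hᵀ * N).mulVec (νhat - ν) k|) +
        2 * ((∑ i, |ν i|) - knorm s ν)) / (1 - 2 * κ) := by
  have hn : 0 < n := lt_of_lt_of_le hs hsn
  haveI : Nonempty (Fin n) := ⟨⟨0, hn⟩⟩
  set z : Fin n → ℝ := fun i => νhat i - ν i with hzdef
  set ρ : ℝ := ⨆ k, |(Hᵀ * N).mulVec (νhat - ν) k| with hρ
  -- choose a maximizing set S of cardinality s
  have hne : (Finset.univ.powersetCard s : Finset (Finset (Fin n))).Nonempty := by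
    rw [Finset.powersetCard_nonempty]
    simpa using hsn
  obtain ⟨S, hSmem, hSmax⟩ := Finset.exists_max_image _ (fun T => ∑ i ∈ T, |ν i|) hne
  rw [Finset.mem_powersetCard] at hSmem
  have hScard : S.card = s := hSmem.2
  -- knorm bound
  have hknorm : knorm s ν ≤ ∑ i ∈ S, |ν i| := by
    apply csSup_le
    · exact ⟨∑ i ∈ S, |ν i|, ⟨S, by simp [min_eq_left hsn, hScard], rfl⟩⟩
    · rintro v ⟨T, hT, rfl⟩
      refine hSmax T ?_
      rw [Finset.mem_powersetCard]
      exact ⟨Finset.subset_univ T, by simpa [min_eq_left hsn] using hT⟩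
  -- split sums over S and Sᶜ
  have hsplit : ∀ f : Fin n → ℝ, ∑ i ∈ S, f i + ∑ i ∈ Sᶜ, f i = ∑ i, f i :=
    fun f => Finset.sum_add_sum_compl S f
  set A := ∑ i ∈ S, |z i| with hA
  set B := ∑ i ∈ Sᶜ, |z i| with hB
  have hzsum : ∑ i, |z i| = A + B := (hsplit fun i => |z i|).symm
  -- inequality (1): B ≤ A + 2 * ∑_{Sᶜ} |ν|
  have e1 : ∑ i ∈ S, (|ν i| - |z i|) ≤ ∑ i ∈ S, |νhat i| := by
    refine Finset.sum_le_sum fun i _ => ?_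
    have := abs_sub_abs_le_abs_sub (ν i) (νhat i)
    have h2 : |ν i - νhat i| = |z i| := by rw [hzdef]; simp [abs_sub_comm]
    linarith [this, h2.le]
  have e2 : ∑ i ∈ Sᶜ, (|z i| - |ν i|) ≤ ∑ i ∈ Sᶜ, |νhat i| := by
    refine Finset.sum_le_sum fun i _ => ?_
    have : |z i| ≤ |νhat i| + |ν i| := by
      rw [hzdef]; exact abs_sub (νhat i) (ν i)
    linarith
  have hSsum : ∑ i ∈ S, (|ν i| - |z i|) = ∑ i ∈ S, |ν i| - A := by
    rw [Finset.sum_sub_distrib]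
  have hScsum : ∑ i ∈ Sᶜ, (|z i| - |ν i|) = B - ∑ i ∈ Sᶜ, |ν i| := by
    rw [Finset.sum_sub_distrib]
  have hν : ∑ i ∈ S, |ν i| + ∑ i ∈ Sᶜ, |ν i| = ∑ i, |ν i| := hsplit _
  have hνhat : ∑ i ∈ S, |νhat i| + ∑ i ∈ Sᶜ, |νhat i| = ∑ i, |νhat i| := hsplit _
  have ineq1 : B ≤ A + 2 * ∑ i ∈ Sᶜ, |ν i| := by
    have := add_le_add e1 e2
    rw [hSsum, hScsum, hνhat] at this
    linarith
  -- inequality (2): A ≤ s * sup |z|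
  have hbdd : BddAbove (Set.range fun i => |z i|) := Set.Finite.bddAbove (Set.finite_range _)
  have hle : ∀ i, |z i| ≤ ⨆ j, |z j| := fun i => le_ciSup hbdd i
  have ineq2 : A ≤ (s : ℝ) * ⨆ j, |z j| := by
    calc A ≤ ∑ _i ∈ S, ⨆ j, |z j| := Finset.sum_le_sum fun i _ => hle i
    _ = (s : ℝ) * ⨆ j, |z j| := by
      rw [Finset.sum_const, hScard, nsmul_eq_mul]
  -- inequality (3): Q condition
  have ineq3 : (⨆ j, |z j|) ≤ ρ + (κ / s) * (A + B) := by
    have := hQ (νhat - ν)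
    rw [← hzsum]
    simpa [hzdef, hρ, Pi.sub_apply] using this
  -- combine
  have hs' : (0 : ℝ) < s := by exact_mod_cast hs
  have hsup0 : (s : ℝ) * ((κ / s) * (A + B)) = κ * (A + B) := by
    field_simp
  have key : (1 - 2 * κ) * (A + B) ≤ 2 * s * ρ + 2 * ((∑ i, |ν i|) - knorm s ν) := by
    have h3 : A ≤ (s : ℝ) * (ρ + (κ / s) * (A + B)) :=
      ineq2.trans (by
        have := mul_le_mul_of_nonneg_left ineq3 hs'.le
        linarith)
    have h4 : A ≤ (s : ℝ) * ρ + κ * (A + B) := by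
      rw [mul_add, hsup0] at h3; exact h3
    have h5 : ∑ i ∈ Sᶜ, |ν i| = (∑ i, |ν i|) - ∑ i ∈ S, |ν i| := by linarith [hν]
    have h6 : ∑ i ∈ Sᶜ, |ν i| ≤ (∑ i, |ν i|) - knorm s ν := by
      rw [h5]; linarith
    nlinarith [ineq1, h4, h6]
  rw [Finset.sum_congr rfl (fun i _ => rfl : ∀ i ∈ Finset.univ, |νhat i - ν i| = |z i|), hzsum]
  rw [le_div_iff₀ (by linarith : (0:ℝ) < 1 - 2 * κ)]
  linarith [key]
end

section
/- Let H satisfy Condition Q_∞(s,κ) with κ < 1/2 for matrix N. For any ν, ν̂ ∈ ℝ^n with ‖ν̂‖₁ ≤ ‖ν‖₁ and z = ν̂ − ν, ρ = ‖H^T N z‖_∞: ‖z‖_∞ ≤ (1−2κ)^{-1}(ρ + ‖ν − ν^s‖₁/s). -/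
open Matrix

/-- If `H` satisfies Condition `Q_∞(s,κ)` with `κ < 1/2`, `‖ν̂‖₁ ≤ ‖ν‖₁`,
`z = ν̂ − ν`, `ρ = ‖HᵀNz‖_∞`, then `‖z‖_∞ ≤ (1−2κ)⁻¹(ρ + ‖ν − νˢ‖₁/s)`. -/
theorem linf_error_bound {m n : ℕ} (N H : Matrix (Fin m) (Fin n) ℝ)
    (s : ℕ) (hs : 0 < s) (hsn : s ≤ n) (κ : ℝ) (hκ0 : 0 < κ) (hκ : κ < 1 / 2)
    (hQ : ∀ w : Fin n → ℝ,
      (⨆ i, |w i|) ≤ (⨆ i, |(Hᵀ * N).mulVec w i|) + (κ / s) * ∑ i, |w i|)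
    (ν νhat : Fin n → ℝ) (h1 : (∑ i, |νhat i|) ≤ ∑ i, |ν i|) :
    (⨆ i, |νhat i - ν i|) ≤
      (1 - 2 * κ)⁻¹ * ((⨆ k, |(Hᵀ * N).mulVec (νhat - ν) k|) +
        ((∑ i, |ν i|) - knorm s ν) / s) := by
  have hn : 0 < n := lt_of_lt_of_le hs hsn
  haveI : Nonempty (Fin n) := ⟨⟨0, hn⟩⟩
  have hspos : (0:ℝ) < (s:ℝ) := by exact_mod_cast hs
  set M : ℝ := ⨆ i, |νhat i - ν i| with hMdef
  set ρ : ℝ := ⨆ k, |(Hᵀ * N).mulVec (νhat - ν) k| with hρdef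
  have hbdd : BddAbove (Set.range fun i => |νhat i - ν i|) :=
    Set.Finite.bddAbove (Set.finite_range _)
  have hMle : ∀ i, |νhat i - ν i| ≤ M := fun i => le_ciSup hbdd i
  -- knorm is achieved by some set S₀ of cardinality s
  set T : Finset ℝ :=
    (Finset.univ.powersetCard s).image (fun S : Finset (Fin n) => ∑ i ∈ S, |ν i|) with hT
  have hset : {v : ℝ | ∃ S : Finset (Fin n), S.card = min s n ∧ v = ∑ i ∈ S, |ν i|} = ↑T := by
    ext v
    simp only [hT, Finset.coe_image, Set.mem_image, Finset.mem_coe,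
      Finset.mem_powersetCard, Set.mem_setOf_eq, min_eq_left hsn]
    constructor
    · rintro ⟨S, hc, rfl⟩; exact ⟨S, ⟨Finset.subset_univ S, hc⟩, rfl⟩
    · rintro ⟨S, ⟨_, hc⟩, rfl⟩; exact ⟨S, hc, rfl⟩
  have hTne : T.Nonempty := by
    obtain ⟨S, -, hSc⟩ := Finset.exists_subset_card_eq (s := (Finset.univ : Finset (Fin n))) (n := s)
      (by simpa using hsn)
    exact ⟨∑ i ∈ S, |ν i|, Finset.mem_image.2 ⟨S, Finset.mem_powersetCard.2
      ⟨Finset.subset_univ S, hSc⟩, rfl⟩⟩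
  have hmem : knorm s ν ∈ (↑T : Set ℝ) := by
    rw [knorm, hset]
    exact Finset.Nonempty.csSup_mem hTne
  obtain ⟨S₀, hS₀mem, hS₀sum⟩ := Finset.mem_image.1 hmem
  have hS₀card : S₀.card = s := (Finset.mem_powersetCard.1 hS₀mem).2
  -- notation for the four partial sums
  set a : ℝ := ∑ i ∈ S₀, |νhat i - ν i| with ha
  set b : ℝ := ∑ i ∈ S₀ᶜ, |νhat i - ν i| with hb
  set c : ℝ := ∑ i ∈ S₀, |ν i| with hc
  set d : ℝ := ∑ i ∈ S₀ᶜ, |ν i| with hd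
  have hknorm : knorm s ν = c := hS₀sum.symm
  have hcd : c + d = ∑ i, |ν i| := Finset.sum_add_sum_compl S₀ _
  have habz : a + b = ∑ i, |νhat i - ν i| := Finset.sum_add_sum_compl S₀ _
  have hd0 : 0 ≤ d := Finset.sum_nonneg fun i _ => abs_nonneg _
  -- a ≤ s * M
  have haM : a ≤ (s:ℝ) * M := by
    calc a ≤ ∑ _i ∈ S₀, M := Finset.sum_le_sum fun i _ => hMle i
      _ = (s:ℝ) * M := by rw [Finset.sum_const, hS₀card, nsmul_eq_mul]
  -- b ≤ a + 2 d
  have hbad : b ≤ a + 2 * d := by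
    have h2 : (∑ i ∈ S₀, |νhat i|) + ∑ i ∈ S₀ᶜ, |νhat i| = ∑ i, |νhat i| :=
      Finset.sum_add_sum_compl S₀ _
    have h3 : c - a ≤ ∑ i ∈ S₀, |νhat i| := by
      rw [hc, ha, ← Finset.sum_sub_distrib]
      refine Finset.sum_le_sum fun i _ => ?_
      have := abs_sub_abs_le_abs_sub (ν i) (νhat i)
      rw [abs_sub_comm] at this
      linarith
    have h4 : b - d ≤ ∑ i ∈ S₀ᶜ, |νhat i| := by
      rw [hb, hd, ← Finset.sum_sub_distrib]
      refine Finset.sum_le_sum fun i _ => ?_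
      have := abs_sub_abs_le_abs_sub (νhat i - ν i) (- ν i)
      simp only [abs_neg, sub_neg_eq_add, sub_add_cancel] at this
      linarith
    linarith [hcd, h1]
  -- apply condition Q to z = νhat - ν
  have hQz := hQ (νhat - ν)
  simp only [Pi.sub_apply] at hQz
  rw [← hMdef, ← hρdef, ← habz] at hQz
  -- combine
  have hκs : κ / (s:ℝ) * (a + b) ≤ κ / (s:ℝ) * (2 * (s:ℝ) * M + 2 * d) := by
    apply mul_le_mul_of_nonneg_left (by linarith) (by positivity)
  have hexp : κ / (s:ℝ) * (2 * (s:ℝ) * M + 2 * d) = 2 * κ * M + 2 * κ * d / (s:ℝ) := by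
    field_simp
  have hMfin : M ≤ ρ + 2 * κ * M + 2 * κ * d / (s:ℝ) := by
    calc M ≤ ρ + κ / (s:ℝ) * (a + b) := hQz
      _ ≤ ρ + (2 * κ * M + 2 * κ * d / (s:ℝ)) := by rw [← hexp]; linarith
      _ = ρ + 2 * κ * M + 2 * κ * d / (s:ℝ) := by ring
  have hds : 0 ≤ d / (s:ℝ) := div_nonneg hd0 hspos.le
  have hfinal : (1 - 2 * κ) * M ≤ ρ + d / (s:ℝ) := by
    have h2κ : 2 * κ * d / (s:ℝ) ≤ d / (s:ℝ) := by
      rw [mul_div_assoc]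
      nlinarith
    linarith
  rw [hknorm]
  have hLd : (∑ i, |ν i|) - c = d := by linarith
  rw [hLd, ← div_eq_inv_mul, le_div_iff₀ (by linarith : (0:ℝ) < 1 - 2 * κ)]
  linarith
end

section
/- Suppose ν is s-sparse (at most s nonzero entries) and ν̂ satisfies ‖ν̂‖₁ ≤ ‖ν‖₁. Then z = ν̂ − ν satisfies ‖z‖₁ ≤ 2‖z‖_{s,1}, where ‖z‖_{s,1} is the sum of the s largest magnitudes of entries of z; consequently ‖z‖₁ ≤ 2s‖z‖_∞ and ‖z‖₂ ≤ √(2s)·‖z‖_∞. -/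
/-- If `ν` is `s`-sparse and `‖ν̂‖₁ ≤ ‖ν‖₁`, then `z = ν̂ − ν` satisfies
`‖z‖₁ ≤ 2‖z‖_{s,1}`, hence `‖z‖₁ ≤ 2s‖z‖_∞` and `‖z‖₂ ≤ √(2s)‖z‖_∞`. -/
theorem sparse_l1_bounds {n : ℕ} (s : ℕ) (hs : 0 < s) (hsn : s ≤ n)
    (ν νhat : Fin n → ℝ) (hsparse : {i : Fin n | ν i ≠ 0}.toFinset.card ≤ s)
    (h1 : (∑ i, |νhat i|) ≤ ∑ i, |ν i|) :
    (∑ i, |νhat i - ν i|) ≤ 2 * knorm s (νhat - ν) ∧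
    (∑ i, |νhat i - ν i|) ≤ 2 * s * (⨆ i, |νhat i - ν i|) ∧
    Real.sqrt (∑ i, (νhat i - ν i) ^ 2) ≤
      Real.sqrt (2 * s) * (⨆ i, |νhat i - ν i|) := by
  have hn : 0 < n := lt_of_lt_of_le hs hsn
  haveI : Nonempty (Fin n) := ⟨⟨0, hn⟩⟩
  set z : Fin n → ℝ := νhat - ν with hzdef
  have hzi : ∀ i, νhat i - ν i = z i := fun i => rfl
  set M : ℝ := ⨆ i, |νhat i - ν i| with hMdef
  have hbdd : BddAbove (Set.range fun i => |νhat i - ν i|) :=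
    Set.Finite.bddAbove (Set.finite_range _)
  have hMle : ∀ i, |z i| ≤ M := fun i => le_ciSup hbdd i
  have hM0 : 0 ≤ M := le_trans (abs_nonneg _) (hMle ⟨0, hn⟩)
  set S : Finset (Fin n) := {i : Fin n | ν i ≠ 0}.toFinset with hSdef
  have hoff : ∀ i, i ∉ S → ν i = 0 := by
    intro i hi
    by_contra h
    exact hi (Set.mem_toFinset.mpr h)
  -- key inequality: off-support mass ≤ on-support mass
  have hνsum : ∑ i, |ν i| = ∑ i ∈ S, |ν i| := by
    refine (Finset.sum_subset (Finset.subset_univ S) ?_).symm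
    intro i _ hi
    rw [hoff i hi, abs_zero]
  have hsplit : ∀ f : Fin n → ℝ, ∑ i, f i = ∑ i ∈ S, f i + ∑ i ∈ Sᶜ, f i :=
    fun f => (Finset.sum_add_sum_compl S f).symm
  have hcompz : ∑ i ∈ Sᶜ, |νhat i| = ∑ i ∈ Sᶜ, |z i| := by
    refine Finset.sum_congr rfl ?_
    intro i hi
    have : ν i = 0 := hoff i (Finset.mem_compl.mp hi)
    simp [hzdef, this]
  have htri : ∑ i ∈ S, |ν i| ≤ ∑ i ∈ S, |νhat i| + ∑ i ∈ S, |z i| := by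
    rw [← Finset.sum_add_distrib]
    refine Finset.sum_le_sum fun i _ => ?_
    have : ν i = νhat i - z i := by simp [hzdef]
    calc |ν i| = |νhat i - z i| := by rw [← this]
      _ ≤ |νhat i| + |z i| := abs_sub _ _
  have key : ∑ i ∈ Sᶜ, |z i| ≤ ∑ i ∈ S, |z i| := by
    have h2 := hsplit (fun i => |νhat i|)
    rw [hcompz] at h2
    rw [h2, hνsum] at h1
    linarith
  have hl1 : ∑ i, |z i| ≤ 2 * ∑ i ∈ S, |z i| := by
    rw [hsplit (fun i => |z i|)]
    linarith
  -- extend S to a set of cardinality s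
  obtain ⟨T, hST, hTcard⟩ :=
    Finset.exists_superset_card_eq hsparse (by simpa using hsn)
  have hSTsum : ∑ i ∈ S, |z i| ≤ ∑ i ∈ T, |z i| :=
    Finset.sum_le_sum_of_subset_of_nonneg hST (fun i _ _ => abs_nonneg _)
  have hbddset : BddAbove {v : ℝ | ∃ U : Finset (Fin n), U.card = min s n ∧
      v = ∑ i ∈ U, |z i|} := by
    refine ⟨∑ i, |z i|, ?_⟩
    rintro v ⟨U, -, rfl⟩
    exact Finset.sum_le_sum_of_subset_of_nonneg (Finset.subset_univ U)
      (fun i _ _ => abs_nonneg _)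
  have hTk : ∑ i ∈ T, |z i| ≤ knorm s z := by
    apply le_csSup hbddset
    exact ⟨T, by rw [hTcard, min_eq_left hsn], rfl⟩
  have hkM : knorm s z ≤ s * M := by
    apply Real.sSup_le
    · rintro v ⟨U, hU, rfl⟩
      calc ∑ i ∈ U, |z i| ≤ ∑ _i ∈ U, M := Finset.sum_le_sum fun i _ => hMle i
        _ = U.card * M := by rw [Finset.sum_const, nsmul_eq_mul]
        _ ≤ s * M := by
            rw [hU, min_eq_left hsn]
    · positivity
  have first : (∑ i, |νhat i - ν i|) ≤ 2 * knorm s (νhat - ν) := by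
    calc (∑ i, |νhat i - ν i|) = ∑ i, |z i| := rfl
      _ ≤ 2 * ∑ i ∈ S, |z i| := hl1
      _ ≤ 2 * knorm s z := by linarith [hSTsum.trans hTk]
  have second : (∑ i, |νhat i - ν i|) ≤ 2 * s * M := by
    calc (∑ i, |νhat i - ν i|) ≤ 2 * knorm s z := first
      _ ≤ 2 * (s * M) := by linarith
      _ = 2 * s * M := by ring
  refine ⟨first, second, ?_⟩
  have hsq : ∑ i, (νhat i - ν i) ^ 2 ≤ 2 * s * M ^ 2 := by
    have : ∑ i, (νhat i - ν i) ^ 2 ≤ ∑ i, M * |z i| := by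
      refine Finset.sum_le_sum fun i _ => ?_
      have h : (νhat i - ν i) ^ 2 = |z i| * |z i| := by
        have hz : z i = νhat i - ν i := rfl
        rw [abs_mul_abs_self, hz]; ring
      rw [h]
      exact mul_le_mul_of_nonneg_right (hMle i) (abs_nonneg _)
    calc ∑ i, (νhat i - ν i) ^ 2 ≤ ∑ i, M * |z i| := this
      _ = M * ∑ i, |z i| := by rw [Finset.mul_sum]
      _ ≤ M * (2 * s * M) := mul_le_mul_of_nonneg_left second hM0
      _ = 2 * s * M ^ 2 := by ring
  calc Real.sqrt (∑ i, (νhat i - ν i) ^ 2) ≤ Real.sqrt (2 * s * M ^ 2) :=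
        Real.sqrt_le_sqrt hsq
    _ = Real.sqrt (2 * s) * M := by
        rw [Real.sqrt_mul (by positivity), Real.sqrt_sq hM0]
end

section
/- (Risk bound for the polyhedral estimate with bounded nuisance, deterministic core) Let X = {x : ∃t ∈ 𝒯, x^T T_k x ≤ t_k ∀k} and B_* = {y : ∃s ∈ 𝒮, y^T S_ℓ y ≤ s_ℓ ∀ℓ} be basic ellitopes, ‖·‖ the norm with dual unit ball B_*, and G = [g₁,…,g_I]. Suppose Δ ∈ 2X and |g_i^T A Δ| ≤ 2ψ for all i ≤ I. If (λ, μ, γ) ≥ 0 satisfy the semidefinite constraint [[Σ_ℓ λ_ℓ S_ℓ, ½B],[½B^T, Σ_k μ_k T_k + A^T(Σ_i γ_i g_i g_i^T)A]] ⪰ 0, then ‖BΔ‖ ≤ φ_𝒮(λ) + 4φ_𝒯(μ) + 4ψ²Σ_i γ_i, where φ_Z(ζ) = max_{z∈Z} ζ^T z is the support function. -/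
open Matrix

lemma sum_mulVec' {n m ι : Type*} [Fintype m] [Fintype ι] (M : ι → Matrix n m ℝ) (v : m → ℝ) :
    (∑ i, M i) *ᵥ v = ∑ i, (M i) *ᵥ v := by
  ext j
  simp only [Matrix.mulVec, dotProduct, Matrix.sum_apply, Finset.sum_apply, Finset.sum_mul]
  rw [Finset.sum_comm]

lemma dotProduct_sum' {m ι : Type*} [Fintype m] [Fintype ι] (v : m → ℝ) (w : ι → m → ℝ) :
    v ⬝ᵥ (∑ i, w i) = ∑ i, v ⬝ᵥ w i := by
  simp only [dotProduct, Finset.sum_apply, Finset.mul_sum]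
  rw [Finset.sum_comm]

lemma vecMulVec_mulVec' {n m : Type*} [Fintype m] (a : n → ℝ) (b : m → ℝ) (w : m → ℝ) :
    (vecMulVec a b) *ᵥ w = (b ⬝ᵥ w) • a := by
  ext j
  simp only [Matrix.mulVec, vecMulVec_apply, dotProduct, Pi.smul_apply, smul_eq_mul,
    Finset.sum_mul, Finset.mul_sum]
  exact Finset.sum_congr rfl fun i _ => by ring


lemma quad_key' {m p q L K I : ℕ}
    (A : Matrix (Fin m) (Fin p) ℝ) (B : Matrix (Fin q) (Fin p) ℝ)
    (S : Fin L → Matrix (Fin q) (Fin q) ℝ)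
    (T : Fin K → Matrix (Fin p) (Fin p) ℝ)
    (g : Fin I → Fin m → ℝ)
    (lam : Fin L → ℝ) (mu : Fin K → ℝ) (γ : Fin I → ℝ) (Δ : Fin p → ℝ) (v : Fin q → ℝ)
    (hLMI : (Matrix.fromBlocks (∑ ℓ, lam ℓ • S ℓ) ((1 / 2 : ℝ) • B)
        ((1 / 2 : ℝ) • Bᵀ)
        ((∑ k, mu k • T k) +
          Aᵀ * (∑ i, γ i • Matrix.vecMulVec (g i) (g i)) * A)).PosSemidef) :
    v ⬝ᵥ B.mulVec Δ ≤ (∑ ℓ, lam ℓ * (v ⬝ᵥ (S ℓ).mulVec v))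
      + (∑ k, mu k * (Δ ⬝ᵥ (T k).mulVec Δ))
      + ∑ i, γ i * (g i ⬝ᵥ A.mulVec Δ)^2 := by
  have h0 := hLMI.dotProduct_mulVec_nonneg (Sum.elim v (-Δ))
  have hAterm : Δ ⬝ᵥ (Aᵀ * (∑ i, γ i • Matrix.vecMulVec (g i) (g i)) * A) *ᵥ Δ
      = ∑ i, γ i * (g i ⬝ᵥ A.mulVec Δ)^2 := by
    rw [← Matrix.mulVec_mulVec, ← Matrix.mulVec_mulVec, Matrix.dotProduct_mulVec,
      Matrix.vecMul_transpose, sum_mulVec', dotProduct_sum']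
    refine Finset.sum_congr rfl fun i _ => ?_
    rw [Matrix.smul_mulVec, vecMulVec_mulVec']
    simp only [dotProduct_smul, smul_eq_mul, smul_smul]
    rw [dotProduct_comm]
    ring
  have hSsum : v ⬝ᵥ (∑ ℓ, lam ℓ • S ℓ) *ᵥ v = ∑ ℓ, lam ℓ * (v ⬝ᵥ (S ℓ).mulVec v) := by
    rw [sum_mulVec', dotProduct_sum']
    simp [Matrix.smul_mulVec]
  have hTsum : Δ ⬝ᵥ (∑ k, mu k • T k) *ᵥ Δ = ∑ k, mu k * (Δ ⬝ᵥ (T k).mulVec Δ) := by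
    rw [sum_mulVec', dotProduct_sum']
    simp [Matrix.smul_mulVec]
  have hB : Δ ⬝ᵥ ((1/2 : ℝ) • Bᵀ) *ᵥ v = (1/2) * (v ⬝ᵥ B *ᵥ Δ) := by
    rw [Matrix.smul_mulVec]
    simp only [dotProduct_smul, smul_eq_mul]
    rw [Matrix.dotProduct_mulVec, Matrix.vecMul_transpose, dotProduct_comm]
  have hB2 : v ⬝ᵥ ((1/2 : ℝ) • B) *ᵥ Δ = (1/2) * (v ⬝ᵥ B *ᵥ Δ) := by
    rw [Matrix.smul_mulVec]
    simp
  simp only [star_trivial, fromBlocks_mulVec, sumElim_dotProduct_sumElim,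
    Sum.elim_comp_inl, Sum.elim_comp_inr, dotProduct_add, Matrix.add_mulVec,
    neg_dotProduct, dotProduct_neg, mulVec_neg, neg_neg] at h0
  rw [hSsum, hTsum, hAterm, hB, hB2] at h0
  linarith

/-- Risk bound for the polyhedral estimate (deterministic core): if `Δ ∈ 2X`,
`|g_iᵀAΔ| ≤ 2ψ` for all `i`, and `(λ,μ,γ) ≥ 0` satisfies the LMI
`[[Σ λ_ℓ S_ℓ, ½B],[½Bᵀ, Σ μ_k T_k + Aᵀ(Σ γ_i g_i g_iᵀ)A]] ⪰ 0`, then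
`‖BΔ‖ ≤ φ_𝒮(λ) + 4φ_𝒯(μ) + 4ψ² Σ γ_i`, where `‖w‖ = max{vᵀw : v ∈ B_*}` and
`φ_Z` is the support function. -/
theorem polyhedral_risk_bound_core {m p q L K I : ℕ}
    (A : Matrix (Fin m) (Fin p) ℝ) (B : Matrix (Fin q) (Fin p) ℝ)
    (S : Fin L → Matrix (Fin q) (Fin q) ℝ) (hS : ∀ ℓ, (S ℓ).PosSemidef)
    (T : Fin K → Matrix (Fin p) (Fin p) ℝ) (hT : ∀ k, (T k).PosSemidef)
    (𝒯 : Set (Fin K → ℝ)) (h𝒯pos : ∀ t ∈ 𝒯, ∀ k, 0 ≤ t k) (h𝒯comp : IsCompact 𝒯)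
    (𝒮 : Set (Fin L → ℝ)) (h𝒮pos : ∀ s ∈ 𝒮, ∀ ℓ, 0 ≤ s ℓ) (h𝒮comp : IsCompact 𝒮)
    (g : Fin I → Fin m → ℝ) (ψ : ℝ) (hψ : 0 ≤ ψ)
    (Δ : Fin p → ℝ)
    (hΔ : ∃ t ∈ 𝒯, ∀ k, Δ ⬝ᵥ (T k).mulVec Δ ≤ 4 * t k)
    (hg : ∀ i, |g i ⬝ᵥ A.mulVec Δ| ≤ 2 * ψ)
    (lam : Fin L → ℝ) (hlam : ∀ ℓ, 0 ≤ lam ℓ)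
    (mu : Fin K → ℝ) (hmu : ∀ k, 0 ≤ mu k)
    (γ : Fin I → ℝ) (hγ : ∀ i, 0 ≤ γ i)
    (hLMI : (Matrix.fromBlocks (∑ ℓ, lam ℓ • S ℓ) ((1 / 2 : ℝ) • B)
        ((1 / 2 : ℝ) • Bᵀ)
        ((∑ k, mu k • T k) +
          Aᵀ * (∑ i, γ i • Matrix.vecMulVec (g i) (g i)) * A)).PosSemidef) :
    sSup {r : ℝ | ∃ v : Fin q → ℝ,
        (∃ s ∈ 𝒮, ∀ ℓ, v ⬝ᵥ (S ℓ).mulVec v ≤ s ℓ) ∧ r = v ⬝ᵥ B.mulVec Δ} ≤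
      sSup ((fun s => lam ⬝ᵥ s) '' 𝒮) + 4 * sSup ((fun t => mu ⬝ᵥ t) '' 𝒯) +
        4 * ψ ^ 2 * ∑ i, γ i := by
  obtain ⟨t, ht𝒯, htΔ⟩ := hΔ
  have hcS : Continuous fun s : Fin L → ℝ => lam ⬝ᵥ s := by
    simp only [dotProduct]
    exact continuous_finset_sum _ fun i _ => continuous_const.mul (continuous_apply i)
  have hcT : Continuous fun t : Fin K → ℝ => mu ⬝ᵥ t := by
    simp only [dotProduct]
    exact continuous_finset_sum _ fun i _ => continuous_const.mul (continuous_apply i)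
  have hbddS : BddAbove ((fun s => lam ⬝ᵥ s) '' 𝒮) := (h𝒮comp.image hcS).bddAbove
  have hbddT : BddAbove ((fun t => mu ⬝ᵥ t) '' 𝒯) := (h𝒯comp.image hcT).bddAbove
  have hTle : mu ⬝ᵥ t ≤ sSup ((fun t => mu ⬝ᵥ t) '' 𝒯) :=
    le_csSup hbddT ⟨t, ht𝒯, rfl⟩
  have hSnn : (0:ℝ) ≤ sSup ((fun s => lam ⬝ᵥ s) '' 𝒮) :=
    Real.sSup_nonneg (by
      rintro x ⟨s, hs, rfl⟩
      exact Finset.sum_nonneg fun ℓ _ => mul_nonneg (hlam ℓ) (h𝒮pos s hs ℓ))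
  have hTnn : (0:ℝ) ≤ mu ⬝ᵥ t :=
    Finset.sum_nonneg fun k _ => mul_nonneg (hmu k) (h𝒯pos t ht𝒯 k)
  have hγnn : (0:ℝ) ≤ 4 * ψ ^ 2 * ∑ i, γ i := by
    have : (0:ℝ) ≤ ∑ i, γ i := Finset.sum_nonneg fun i _ => hγ i
    positivity
  apply Real.sSup_le
  · rintro r ⟨v, ⟨s, hs𝒮, hsv⟩, rfl⟩
    have h1 := quad_key' A B S T g lam mu γ Δ v hLMI
    have h2 : ∑ ℓ, lam ℓ * (v ⬝ᵥ (S ℓ).mulVec v) ≤ lam ⬝ᵥ s :=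
      Finset.sum_le_sum fun ℓ _ => mul_le_mul_of_nonneg_left (hsv ℓ) (hlam ℓ)
    have h3 : ∑ k, mu k * (Δ ⬝ᵥ (T k).mulVec Δ) ≤ 4 * (mu ⬝ᵥ t) := by
      rw [dotProduct, Finset.mul_sum]
      exact Finset.sum_le_sum fun k _ => by
        have := mul_le_mul_of_nonneg_left (htΔ k) (hmu k)
        linarith
    have h4 : ∑ i, γ i * (g i ⬝ᵥ A.mulVec Δ)^2 ≤ 4 * ψ ^ 2 * ∑ i, γ i := by
      rw [Finset.mul_sum]
      refine Finset.sum_le_sum fun i _ => ?_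
      have habs := abs_le.mp (hg i)
      have hsq : (g i ⬝ᵥ A.mulVec Δ)^2 ≤ 4 * ψ ^ 2 := by nlinarith [habs.1, habs.2]
      calc γ i * (g i ⬝ᵥ A.mulVec Δ)^2 ≤ γ i * (4 * ψ ^ 2) :=
            mul_le_mul_of_nonneg_left hsq (hγ i)
        _ = 4 * ψ ^ 2 * γ i := by ring
    have h5 : lam ⬝ᵥ s ≤ sSup ((fun s => lam ⬝ᵥ s) '' 𝒮) :=
      le_csSup hbddS ⟨s, hs𝒮, rfl⟩
    linarith
  · linarith
end
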